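/- Let ψ : P_• → P'_• be an injective chain map of bimodule resolutions of a k-algebra A lifting the identity on A. If the quotient P'_n / ψ(P_n) is projective as an A-bimodule for every n, then there exists a chain map ψ' : P'_• → P_• lifting the identity on A with ψ' ∘ ψ = 1_{P}. Moreover, if A is graded, P and P' are graded resolutions, and ψ is graded, then ψ' may be chosen graded. -/

import Mathlib

/-!
STATEMENT 14.  Bimodule resolutions of a `k`-algebra `A` are viewed as
resolutions of `A` by left modules over the enveloping algebra `Aᵉ = A ⊗ Aᵒᵖ`
(per the context).  We therefore state the bootstrap lemma for resolutions of a
module `N` over an arbitrary ring `B` (take `B = Aᵉ` and `N = A`).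
-/

open LinearMap

/-- An injective linear map with projective cokernel splits. -/
theorem aux_split {B : Type*} [Ring B] {M M' : Type*} [AddCommGroup M] [AddCommGroup M']
    [Module B M] [Module B M'] (f : M →ₗ[B] M') (hf : Function.Injective f)
    (hproj : Module.Projective B (M' ⧸ LinearMap.range f)) :
    ∃ σ : M' →ₗ[B] M, σ ∘ₗ f = LinearMap.id := by
  obtain ⟨s, hs⟩ := Module.projective_lifting_property (LinearMap.range f).mkQ
    (LinearMap.id (R := B) (M := M' ⧸ LinearMap.range f)) (Submodule.mkQ_surjective _)
  set p : M' →ₗ[B] M' := LinearMap.id - s ∘ₗ (LinearMap.range f).mkQ with hp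
  have hmem : ∀ x, p x ∈ LinearMap.range f := by
    intro x
    have h1 : (LinearMap.range f).mkQ (s ((LinearMap.range f).mkQ x))
        = (LinearMap.range f).mkQ x := congrArg (fun k => k ((LinearMap.range f).mkQ x)) hs
    have h2 : (LinearMap.range f).mkQ (p x) = 0 := by
      simp only [hp, LinearMap.sub_apply, LinearMap.id_apply, LinearMap.comp_apply, map_sub]
      rw [h1]; abel
    rwa [← LinearMap.mem_ker, Submodule.ker_mkQ] at h2
  refine ⟨(LinearEquiv.ofInjective f hf).symm.toLinearMap ∘ₗ
    LinearMap.codRestrict (LinearMap.range f) p hmem, ?_⟩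
  ext x
  have h0 : (LinearMap.range f).mkQ (f x) = 0 := by
    rw [← LinearMap.mem_ker, Submodule.ker_mkQ]; exact ⟨x, rfl⟩
  have hfx : p (f x) = f x := by
    simp only [hp, LinearMap.sub_apply, LinearMap.id_apply, LinearMap.comp_apply]
    rw [show (LinearMap.range f).mkQ (f x) = 0 from h0]
    simp
  have hco : LinearMap.codRestrict (LinearMap.range f) p hmem (f x)
      = LinearEquiv.ofInjective f hf x := by
    apply Subtype.ext
    rw [LinearMap.codRestrict_apply, hfx]
    exact (LinearEquiv.ofInjective_apply f (h := hf) x).symm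
  simp only [LinearMap.comp_apply, LinearMap.id_apply, LinearEquiv.coe_coe,
    LinearMap.coe_comp, Function.comp_apply]
  rw [hco, LinearEquiv.symm_apply_apply]

/-- Lifting lemma: if `g` vanishes on `range ψ`, the cokernel of `ψ` is projective,
and `range g ≤ range e`, then `g` lifts through `e` by a map killing `range ψ`. -/
theorem aux_lift {B : Type*} [Ring B] {M M' X W : Type*}
    [AddCommGroup M] [AddCommGroup M'] [AddCommGroup X] [AddCommGroup W]
    [Module B M] [Module B M'] [Module B X] [Module B W]
    (ψ : M →ₗ[B] M') (g : M' →ₗ[B] X) (e : W →ₗ[B] X)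
    (hproj : Module.Projective B (M' ⧸ LinearMap.range ψ))
    (hg : g ∘ₗ ψ = 0) (hr : LinearMap.range g ≤ LinearMap.range e) :
    ∃ h : M' →ₗ[B] W, e ∘ₗ h = g ∧ h ∘ₗ ψ = 0 := by
  have hker : LinearMap.range ψ ≤ LinearMap.ker g := by
    rintro _ ⟨x, rfl⟩
    exact LinearMap.mem_ker.mpr (by simpa using congrArg (fun k => k x) hg)
  set gbar : (M' ⧸ LinearMap.range ψ) →ₗ[B] X := (LinearMap.range ψ).liftQ g hker with hgbar
  have hgbarr : ∀ q, gbar q ∈ LinearMap.range e := by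
    intro q
    obtain ⟨x, rfl⟩ := Submodule.mkQ_surjective _ q
    exact hr ⟨x, by simp [hgbar]⟩
  set gbar' : (M' ⧸ LinearMap.range ψ) →ₗ[B] (LinearMap.range e) :=
    LinearMap.codRestrict _ gbar hgbarr with hgbar'
  set e' : W →ₗ[B] (LinearMap.range e) :=
    LinearMap.codRestrict _ e (fun w => ⟨w, rfl⟩) with he'
  have he'surj : Function.Surjective e' := by
    rintro ⟨y, w, rfl⟩
    exact ⟨w, rfl⟩
  obtain ⟨l, hl⟩ := Module.projective_lifting_property e' gbar' he'surj
  refine ⟨l ∘ₗ (LinearMap.range ψ).mkQ, ?_, ?_⟩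
  · ext x
    have := congrArg (fun k => (k ((LinearMap.range ψ).mkQ x) : X)) hl
    simp [he', hgbar', hgbar] at this
    exact this
  · ext x
    have : (LinearMap.range ψ).mkQ (ψ x) = 0 := by
      rw [← Submodule.ker_mkQ (LinearMap.range ψ)] at *
      exact (LinearMap.mem_ker).mp (by simp [Submodule.ker_mkQ])
    simp [this]

/-- if `ψ : P → P'` is an injective chain map of resolutions of `N`
lifting the identity on `N`, and each quotient `P'_n / ψ(P_n)` is projective,
then there is a chain map `ψ' : P' → P` lifting the identity with `ψ' ∘ ψ = 1`. -/
theorem bootstrap_splitting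
    (B : Type) [Ring B] (N : Type) [AddCommGroup N] [Module B N]
    (P P' : ℕ → ModuleCat B)
    (dP : ∀ n, ↥(P (n+1)) →ₗ[B] ↥(P n))
    (dP' : ∀ n, ↥(P' (n+1)) →ₗ[B] ↥(P' n))
    (εP : ↥(P 0) →ₗ[B] N) (εP' : ↥(P' 0) →ₗ[B] N)
    -- `P` is a resolution of `N`:
    (hPsurj : Function.Surjective εP)
    (hP0 : LinearMap.range (dP 0) = LinearMap.ker εP)
    (hP : ∀ n, LinearMap.range (dP (n+1)) = LinearMap.ker (dP n))
    -- `P'` is a resolution of `N`: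
    (hP'surj : Function.Surjective εP')
    (hP'0 : LinearMap.range (dP' 0) = LinearMap.ker εP')
    (hP' : ∀ n, LinearMap.range (dP' (n+1)) = LinearMap.ker (dP' n))
    -- `ψ` is an injective chain map lifting the identity on `N`:
    (ψ : ∀ n, ↥(P n) →ₗ[B] ↥(P' n))
    (hψchain : ∀ n, ψ n ∘ₗ dP n = dP' n ∘ₗ ψ (n+1))
    (hψlift : εP' ∘ₗ ψ 0 = εP)
    (hψinj : ∀ n, Function.Injective (ψ n))
    -- each quotient `P'_n / ψ(P_n)` is projective:
    (hproj : ∀ n, Module.Projective B (↥(P' n) ⧸ LinearMap.range (ψ n))) :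
    ∃ ψ' : ∀ n, ↥(P' n) →ₗ[B] ↥(P n),
      (∀ n, ψ' n ∘ₗ dP' n = dP n ∘ₗ ψ' (n+1)) ∧
      εP ∘ₗ ψ' 0 = εP' ∧
      (∀ n, ψ' n ∘ₗ ψ n = LinearMap.id) := by
  classical
  -- state: a retraction with "boundary image" control
  -- base case
  have base : ∃ f : ↥(P' 0) →ₗ[B] ↥(P 0),
      f ∘ₗ ψ 0 = LinearMap.id ∧
      LinearMap.range (f ∘ₗ dP' 0) ≤ LinearMap.range (dP 0) ∧
      εP ∘ₗ f = εP' := by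
    obtain ⟨σ, hσ⟩ := aux_split (ψ 0) (hψinj 0) (hproj 0)
    set δ : ↥(P' 0) →ₗ[B] N := εP' - εP ∘ₗ σ with hδ
    have hδψ : δ ∘ₗ ψ 0 = 0 := by
      rw [hδ, LinearMap.sub_comp, hψlift, LinearMap.comp_assoc, hσ]
      simp
    have hδr : LinearMap.range δ ≤ LinearMap.range εP := by
      intro x _; exact hPsurj x
    obtain ⟨h, hh1, hh2⟩ := aux_lift (ψ 0) δ εP (hproj 0) hδψ hδr
    refine ⟨σ + h, ?_, ?_, ?_⟩
    · rw [LinearMap.add_comp, hσ, hh2, add_zero]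
    · rintro _ ⟨x, rfl⟩
      rw [hP0]
      refine LinearMap.mem_ker.mpr ?_
      have h1 : εP ((σ + h) (dP' 0 x)) = εP' (dP' 0 x) := by
        have := congrArg (fun k => k (dP' 0 x)) hh1
        simp only [LinearMap.add_apply, map_add]
        simp only [LinearMap.comp_apply] at this
        rw [this, hδ]
        simp [LinearMap.sub_apply]
      have h2 : εP' (dP' 0 x) = 0 := by
        have : dP' 0 x ∈ LinearMap.ker εP' := hP'0 ▸ ⟨x, rfl⟩
        exact this
      simpa [h2] using h1
    · ext x
      have := congrArg (fun k => k x) hh1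
      simp only [LinearMap.comp_apply] at this ⊢
      simp only [LinearMap.add_apply, map_add, this, hδ, LinearMap.sub_apply,
        LinearMap.comp_apply]
      abel
  obtain ⟨f0, hf0ψ, hf0r, hf0ε⟩ := base
  -- inductive step
  have step : ∀ n (f : ↥(P' n) →ₗ[B] ↥(P n)),
      f ∘ₗ ψ n = LinearMap.id →
      LinearMap.range (f ∘ₗ dP' n) ≤ LinearMap.range (dP n) →
      ∃ g : ↥(P' (n+1)) →ₗ[B] ↥(P (n+1)),
        g ∘ₗ ψ (n+1) = LinearMap.id ∧
        LinearMap.range (g ∘ₗ dP' (n+1)) ≤ LinearMap.range (dP (n+1)) ∧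
        dP n ∘ₗ g = f ∘ₗ dP' n := by
    intro n f hfψ hfr
    obtain ⟨σ, hσ⟩ := aux_split (ψ (n+1)) (hψinj (n+1)) (hproj (n+1))
    set δ : ↥(P' (n+1)) →ₗ[B] ↥(P n) := f ∘ₗ dP' n - dP n ∘ₗ σ with hδ
    have hδψ : δ ∘ₗ ψ (n+1) = 0 := by
      ext x
      have h1 : ψ n (dP n x) = dP' n (ψ (n+1) x) := congrArg (fun k => k x) (hψchain n)
      have h2 : f (ψ n (dP n x)) = dP n x := congrArg (fun k => k (dP n x)) hfψ
      have h3 : σ (ψ (n+1) x) = x := congrArg (fun k => k x) hσ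
      simp only [hδ, LinearMap.comp_apply, LinearMap.sub_apply, LinearMap.zero_apply,
        ← h1, h2, h3, sub_self]
    have hδr : LinearMap.range δ ≤ LinearMap.range (dP n) := by
      rintro _ ⟨x, rfl⟩
      rw [hδ]
      simp only [LinearMap.sub_apply, LinearMap.comp_apply]
      exact sub_mem (hfr ⟨x, rfl⟩) ⟨σ x, rfl⟩
    obtain ⟨h, hh1, hh2⟩ := aux_lift (ψ (n+1)) δ (dP n) (hproj (n+1)) hδψ hδr
    refine ⟨σ + h, ?_, ?_, ?_⟩
    · rw [LinearMap.add_comp, hσ, hh2, add_zero]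
    · rintro _ ⟨x, rfl⟩
      rw [hP n]
      refine LinearMap.mem_ker.mpr ?_
      have hd : dP n ((σ + h) (dP' (n+1) x)) = f (dP' n (dP' (n+1) x)) := by
        have := congrArg (fun k => k (dP' (n+1) x)) hh1
        simp only [LinearMap.comp_apply] at this
        simp only [LinearMap.add_apply, map_add, this, hδ, LinearMap.sub_apply,
          LinearMap.comp_apply]
        abel
      have hz : dP' n (dP' (n+1) x) = 0 := by
        have : dP' (n+1) x ∈ LinearMap.ker (dP' n) := hP' n ▸ ⟨x, rfl⟩
        exact this
      simp only [LinearMap.comp_apply, hd, hz, map_zero]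
    · ext x
      have := congrArg (fun k => k x) hh1
      simp only [LinearMap.comp_apply] at this ⊢
      simp only [LinearMap.add_apply, map_add, this, hδ, LinearMap.sub_apply,
        LinearMap.comp_apply]
      abel
  -- build the whole family by recursion
  choose stepF stepH1 stepH2 stepH3 using step
  let F : ∀ n, { f : ↥(P' n) →ₗ[B] ↥(P n) //
      f ∘ₗ ψ n = LinearMap.id ∧
      LinearMap.range (f ∘ₗ dP' n) ≤ LinearMap.range (dP n) } :=
    fun n => Nat.rec ⟨f0, hf0ψ, hf0r⟩
      (fun m prev => ⟨stepF m prev.1 prev.2.1 prev.2.2,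
        stepH1 m prev.1 prev.2.1 prev.2.2, stepH2 m prev.1 prev.2.1 prev.2.2⟩) n
  refine ⟨fun n => (F n).1, ?_, ?_, fun n => (F n).2.1⟩
  · intro n
    exact (stepH3 n (F n).1 (F n).2.1 (F n).2.2).symm
  · exact hf0ε
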